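/- Let b, c ∈ ℝⁿ and F, G ∈ ℝ^{n×p}. Then the Hausdorff distance between conv(Z(b,F) ∪ Z(c,G)) and the enclosing zonotope Z((b+c)/2, ((F+G)/2, (b−c)/2, (F−G)/2)) does not exceed ‖F − G‖, where the matrix norm is taken with respect to the maximum norm on the domain. -/

import Mathlib

open Matrix

/-- The zonotope with center `c` and generators the columns of `G`. -/
def zonotope {n : ℕ} {ι : Type*} [Fintype ι] (c : Fin n → ℝ)
    (G : Matrix (Fin n) ι ℝ) : Set (Fin n → ℝ) :=
  {x | ∃ lam : ι → ℝ, (∀ j, |lam j| ≤ 1) ∧ x = c + G.mulVec lam}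

/-- The generator matrix `((F+G)/2, (b−c)/2, (F−G)/2)` of the enclosing zonotope. -/
noncomputable def enclosureMatrix {n p : ℕ} (b c : Fin n → ℝ) (F G : Matrix (Fin n) (Fin p) ℝ) :
    Matrix (Fin n) (Fin p ⊕ (Unit ⊕ Fin p)) ℝ :=
  Matrix.of fun i j =>
    Sum.elim (fun k => (F i k + G i k) / 2)
      (Sum.elim (fun _ => (b i - c i) / 2) (fun k => (F i k - G i k) / 2)) j

/-- The operator norm of a matrix w.r.t. the maximum norm on the domain and the
norm on `Fin n → ℝ` on the codomain. -/
noncomputable def matrixOpNorm {n p : ℕ} (A : Matrix (Fin n) (Fin p) ℝ) : ℝ :=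
  sSup ((fun x => ‖A.mulVec x‖) '' {x : Fin p → ℝ | ‖x‖ ≤ 1})

lemma matrixOpNorm_bdd {n p : ℕ} (A : Matrix (Fin n) (Fin p) ℝ) :
    BddAbove ((fun x => ‖A.mulVec x‖) '' {x : Fin p → ℝ | ‖x‖ ≤ 1}) := by
  have hset : {x : Fin p → ℝ | ‖x‖ ≤ 1} = Metric.closedBall 0 1 := by
    ext x; simp [dist_zero_right]
  have hcont : Continuous fun x : Fin p → ℝ => ‖A.mulVec x‖ := by
    have h1 : Continuous fun x : Fin p → ℝ => A.mulVec x := by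
      have := (A.mulVecLin : (Fin p → ℝ) →ₗ[ℝ] (Fin n → ℝ)).continuous_of_finiteDimensional
      exact this
    exact h1.norm
  rw [hset]
  exact ((isCompact_closedBall (0 : Fin p → ℝ) 1).image hcont).bddAbove

lemma norm_mulVec_le_opNorm {n p : ℕ} (A : Matrix (Fin n) (Fin p) ℝ)
    (v : Fin p → ℝ) (hv : ‖v‖ ≤ 1) : ‖A.mulVec v‖ ≤ matrixOpNorm A :=
  le_csSup (matrixOpNorm_bdd A) (Set.mem_image_of_mem _ hv)

lemma matrixOpNorm_nonneg {n p : ℕ} (A : Matrix (Fin n) (Fin p) ℝ) :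
    0 ≤ matrixOpNorm A :=
  le_trans (norm_nonneg _) (norm_mulVec_le_opNorm A 0 (by simp))

lemma zonotope_convex {n : ℕ} {ι : Type*} [Fintype ι] (c : Fin n → ℝ)
    (G : Matrix (Fin n) ι ℝ) : Convex ℝ (zonotope c G) := by
  rintro x ⟨l1, hl1, rfl⟩ y ⟨l2, hl2, rfl⟩ a b ha hb hab
  refine ⟨a • l1 + b • l2, fun j => ?_, ?_⟩
  · calc |(a • l1 + b • l2) j| ≤ |a * l1 j| + |b * l2 j| := by
          simpa using abs_add_le (a * l1 j) (b * l2 j)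
      _ = a * |l1 j| + b * |l2 j| := by
          rw [abs_mul, abs_mul, abs_of_nonneg ha, abs_of_nonneg hb]
      _ ≤ a * 1 + b * 1 := by
          gcongr; exacts [hl1 j, hl2 j]
      _ = 1 := by linarith
  · rw [Matrix.mulVec_add, Matrix.mulVec_smul, Matrix.mulVec_smul]
    match_scalars <;> linarith

lemma enclosureMatrix_eq {n p : ℕ} (b c : Fin n → ℝ) (F G : Matrix (Fin n) (Fin p) ℝ) :
    enclosureMatrix b c F G =
      Matrix.fromCols ((1/2 : ℝ) • (F + G))
        (Matrix.fromCols (Matrix.of fun i (_ : Unit) => (1/2) * (b i - c i))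
          ((1/2 : ℝ) • (F - G))) := by
  ext i j
  rcases j with j | j | j <;>
    simp [enclosureMatrix, Matrix.fromCols, Matrix.smul_apply] <;> ring

lemma sum_decomp {p : ℕ} (lam : Fin p ⊕ (Unit ⊕ Fin p) → ℝ) :
    lam = Sum.elim (fun k => lam (Sum.inl k))
      (Sum.elim (fun _ => lam (Sum.inr (Sum.inl ()))) (fun k => lam (Sum.inr (Sum.inr k)))) := by
  funext j; rcases j with j | ⟨⟩ | j <;> rfl

lemma unitcol_mulVec {n : ℕ} (b c : Fin n → ℝ) (w : Unit → ℝ) :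
    (Matrix.of fun i (_ : Unit) => (1/2 : ℝ) * (b i - c i)).mulVec w
      = ((1/2) * w ()) • (b - c) := by
  funext i
  simp [Matrix.mulVec, dotProduct]
  ring

lemma enclosure_mulVec {n p : ℕ} (b c : Fin n → ℝ) (F G : Matrix (Fin n) (Fin p) ℝ)
    (lam : Fin p ⊕ (Unit ⊕ Fin p) → ℝ) :
    (enclosureMatrix b c F G).mulVec lam
      = (1/2 : ℝ) • (F.mulVec (fun k => lam (Sum.inl k)) + G.mulVec (fun k => lam (Sum.inl k)))
        + ((1/2) * lam (Sum.inr (Sum.inl ()))) • (b - c)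
        + (1/2 : ℝ) • (F.mulVec (fun k => lam (Sum.inr (Sum.inr k)))
            - G.mulVec (fun k => lam (Sum.inr (Sum.inr k)))) := by
  conv_lhs => rw [enclosureMatrix_eq, sum_decomp lam]
  rw [Matrix.fromCols_mulVec_sumElim, Matrix.fromCols_mulVec_sumElim,
    unitcol_mulVec, Matrix.smul_mulVec, Matrix.smul_mulVec,
    Matrix.add_mulVec, Matrix.sub_mulVec]
  abel

lemma subset_enclosure {n p : ℕ} (b c : Fin n → ℝ) (F G : Matrix (Fin n) (Fin p) ℝ) :
    zonotope b F ∪ zonotope c G ⊆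
      zonotope ((1 / 2 : ℝ) • (b + c)) (enclosureMatrix b c F G) := by
  rintro x (⟨lam, hlam, rfl⟩ | ⟨lam, hlam, rfl⟩)
  · refine ⟨Sum.elim lam (Sum.elim (fun _ => 1) lam), ?_, ?_⟩
    · rintro (j | j | j) <;> simp [hlam]
    · rw [enclosure_mulVec]
      simp only [Sum.elim_inl, Sum.elim_inr]
      match_scalars <;> ring
  · refine ⟨Sum.elim lam (Sum.elim (fun _ => -1) (-lam)), ?_, ?_⟩
    · rintro (j | j | j) <;> simp [hlam, abs_neg]
    · rw [enclosure_mulVec]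
      simp only [Sum.elim_inl, Sum.elim_inr, Matrix.mulVec_neg]
      match_scalars <;> ring

theorem hausdorffDist_convexHull_enclosure_le {n p : ℕ} (b c : Fin n → ℝ)
    (F G : Matrix (Fin n) (Fin p) ℝ) :
    Metric.hausdorffDist (convexHull ℝ (zonotope b F ∪ zonotope c G))
        (zonotope ((1 / 2 : ℝ) • (b + c)) (enclosureMatrix b c F G))
      ≤ matrixOpNorm (F - G) := by
  have hsub : convexHull ℝ (zonotope b F ∪ zonotope c G) ⊆
      zonotope ((1 / 2 : ℝ) • (b + c)) (enclosureMatrix b c F G) :=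
    convexHull_min (subset_enclosure b c F G) (zonotope_convex _ _)
  apply Metric.hausdorffDist_le_of_mem_dist (matrixOpNorm_nonneg _)
  · intro x hx
    exact ⟨x, hsub hx, by simpa using matrixOpNorm_nonneg (F - G)⟩
  · rintro y ⟨lam, hlam, rfl⟩
    set lam1 : Fin p → ℝ := fun k => lam (Sum.inl k) with hlam1
    set mu : ℝ := lam (Sum.inr (Sum.inl ())) with hmu
    set lam2 : Fin p → ℝ := fun k => lam (Sum.inr (Sum.inr k)) with hlam2
    have hmu1 : |mu| ≤ 1 := hlam _
    set t : ℝ := (1 + mu) / 2 with ht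
    have ht0 : 0 ≤ t := by rw [ht]; cases abs_le.mp hmu1; linarith
    have ht1 : 1 - t ≥ 0 := by rw [ht]; cases abs_le.mp hmu1; linarith
    have hx1 : b + F.mulVec lam1 ∈ convexHull ℝ (zonotope b F ∪ zonotope c G) :=
      subset_convexHull ℝ _ (Or.inl ⟨lam1, fun j => hlam _, rfl⟩)
    have hx2 : c + G.mulVec lam1 ∈ convexHull ℝ (zonotope b F ∪ zonotope c G) :=
      subset_convexHull ℝ _ (Or.inr ⟨lam1, fun j => hlam _, rfl⟩)
    refine ⟨t • (b + F.mulVec lam1) + (1 - t) • (c + G.mulVec lam1),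
      (convex_convexHull ℝ _) hx1 hx2 ht0 ht1 (by ring), ?_⟩
    rw [dist_eq_norm]
    have hveq : ((1 / 2 : ℝ) • (b + c) + (enclosureMatrix b c F G).mulVec lam)
        - (t • (b + F.mulVec lam1) + (1 - t) • (c + G.mulVec lam1))
        = (F - G).mulVec (fun k => (lam2 k - mu * lam1 k) / 2) := by
      rw [enclosure_mulVec]
      have hmv : (F - G).mulVec (fun k => (lam2 k - mu * lam1 k) / 2)
          = (1/2 : ℝ) • (F.mulVec lam2 - G.mulVec lam2)
            - ((1/2) * mu) • (F.mulVec lam1 - G.mulVec lam1) := by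
        have : (fun k => (lam2 k - mu * lam1 k) / 2)
            = (1/2 : ℝ) • lam2 - ((1/2) * mu) • lam1 := by
          funext k; simp [Pi.smul_apply, smul_eq_mul]; ring
        rw [this, Matrix.mulVec_sub, Matrix.mulVec_smul, Matrix.mulVec_smul,
          Matrix.sub_mulVec, Matrix.sub_mulVec]
      rw [hmv]
      match_scalars <;> (try rw [ht]) <;> ring
    rw [hveq]
    apply norm_mulVec_le_opNorm
    have h2 : (0:ℝ) ≤ 1 := zero_le_one
    rw [pi_norm_le_iff_of_nonneg h2]
    intro k
    have h1 : |lam1 k| ≤ 1 := hlam _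
    have h2' : |lam2 k| ≤ 1 := hlam _
    rw [Real.norm_eq_abs]
    have : |lam2 k - mu * lam1 k| ≤ |lam2 k| + |mu| * |lam1 k| := by
      calc |lam2 k - mu * lam1 k| ≤ |lam2 k| + |mu * lam1 k| := abs_sub _ _
        _ = |lam2 k| + |mu| * |lam1 k| := by rw [abs_mul]
    have hb2 : |mu| * |lam1 k| ≤ 1 := by
      calc |mu| * |lam1 k| ≤ 1 * 1 := by gcongr
        _ = 1 := one_mul 1
    rw [abs_div, abs_two]
    calc |lam2 k - mu * lam1 k| / 2 ≤ (|lam2 k| + |mu| * |lam1 k|) / 2 := by linarith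
      _ ≤ (1 + 1) / 2 := by linarith
      _ = 1 := by norm_num
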